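/- Let T = W⊙F be an update operator in which each F_{ij} is continuous and is either the identity or a deviation function D_i depending only on the row index i, and let A = {i : W_{i,Out(i)} > 0}. If μ ∈ ℝ does not belong to ∩_{i∈A} Fix(D_i), then for no initial vector b₀ ∈ ℝ^n do the iterates T^t(b₀) converge to the constant vector (μ,…,μ) as t → ∞ (society cannot become wise about the true value μ). -/

import Mathlib

open Filter
open scoped Classical

/-- no wisdom. With continuous entries, each the identity or a
row-dependent deviation function, if `μ` is not a common neutral opinion of
all agents with positive out-group weight, then no initial opinion vector
leads the iterates to converge to the consensus `(μ,…,μ)`. -/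
theorem stmt_15 (n : ℕ) (hn : 2 ≤ n)
    (W : Matrix (Fin n) (Fin n) ℝ)
    (hW0 : ∀ i j, 0 ≤ W i j) (hW1 : ∀ i, ∑ j, W i j = 1)
    (F : Fin n → Fin n → ℝ → ℝ)
    (D : Fin n → ℝ → ℝ) (hD : ∀ i, D i ≠ id)
    (hF : ∀ i j, F i j = id ∨ F i j = D i)
    (hFc : ∀ i j, Continuous (F i j))
    (T : (Fin n → ℝ) → Fin n → ℝ)
    (hT : ∀ b i, T b i = ∑ j, W i j * F i j (b j))
    (A : Set (Fin n))
    (hA : A = {i | 0 < ∑ j ∈ Finset.univ.filter fun j => F i j ≠ id, W i j})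
    (μ : ℝ) (hμ : μ ∉ ⋂ i ∈ A, {x : ℝ | D i x = x}) :
    ∀ b₀ : Fin n → ℝ, ¬ Tendsto (fun t => T^[t] b₀) atTop (nhds fun _ => μ) := by
  intro b₀ h
  -- extract a bad agent
  simp only [Set.mem_iInter, Set.mem_setOf_eq, not_forall] at hμ
  obtain ⟨i, hiA, hDi⟩ := hμ
  -- T is continuous
  have hTeq : T = fun b i => ∑ j, W i j * F i j (b j) := by
    funext b i; exact hT b i
  have hTc : Continuous T := by
    rw [hTeq]
    exact continuous_pi fun i => continuous_finset_sum _ fun j _ =>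
      continuous_const.mul ((hFc i j).comp (continuous_apply j))
  -- the limit is a fixed point
  have h1 : Tendsto (fun t => T^[t + 1] b₀) atTop (nhds fun _ => μ) :=
    h.comp (tendsto_add_atTop_nat 1)
  have h2 : Tendsto (fun t => T^[t + 1] b₀) atTop (nhds (T fun _ => μ)) := by
    have := (hTc.tendsto (fun _ => μ)).comp h
    simpa [Function.comp_def, Function.iterate_succ_apply'] using this
  have hfix : T (fun _ => μ) = fun _ => μ := tendsto_nhds_unique h2 h1
  -- compute T μ̄ at i
  have hfixi : T (fun _ => μ) i = μ := congrFun hfix i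
  rw [hT] at hfixi
  set S : Finset (Fin n) := Finset.univ.filter fun j => F i j ≠ id with hS
  have hsplit : ∑ j, W i j * F i j μ
      = (∑ j ∈ S, W i j) * D i μ + (∑ j ∈ Sᶜ, W i j) * μ := by
    rw [← Finset.sum_add_sum_compl S, Finset.sum_mul, Finset.sum_mul]
    congr 1
    · apply Finset.sum_congr rfl
      intro j hj
      have hne : F i j ≠ id := (Finset.mem_filter.mp hj).2
      rcases hF i j with h' | h'
      · exact absurd h' hne
      · rw [h']
    · apply Finset.sum_congr rfl
      intro j hj
      have : ¬ F i j ≠ id := by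
        simpa [hS] using (Finset.mem_compl.mp hj)
      rw [not_not.mp this]; rfl
  have hw1 : ∑ j ∈ S, W i j + ∑ j ∈ Sᶜ, W i j = 1 := by
    rw [Finset.sum_add_sum_compl]; exact hW1 i
  have hpos : 0 < ∑ j ∈ S, W i j := by
    have := hiA
    rw [hA] at this
    simpa [hS] using this
  rw [hsplit] at hfixi
  apply hDi
  have hc : ∑ j ∈ Sᶜ, W i j = 1 - ∑ j ∈ S, W i j := by linarith
  rw [hc] at hfixi
  have : (∑ j ∈ S, W i j) * (D i μ - μ) = 0 := by ring_nf; ring_nf at hfixi; linarith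
  have := mul_eq_zero.mp this
  rcases this with h' | h'
  · exact absurd h' (ne_of_gt hpos)
  · linarith
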